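/- Discretization of Gaussian coherent-state ensembles: let μ be a mean-zero complex Gaussian measure of variance E' on ℂ, and for grid spacing ε > 0 let Δ_L be the points of a square grid of spacing ε restricted to the disk {α : |α|² ≤ 1/ε}, with p(c) ∝ μ(□_c) (the measure of the grid cell □_c around c). Then as ε → 0: (a) ‖∑_{c∈Δ_L} p(c)|c⟩⟨c| − ∫|α⟩⟨α| dμ(α)‖_1 → 0, and (b) max_{c∈Δ_L} max_{α∈□_c} ‖ |c⟩⟨c| − |α⟩⟨α| ‖_1 → 0. -/

import Mathlib

open MeasureTheory ProbabilityTheory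
open scoped Classical NNReal

/-- Mean-zero complex Gaussian measure on `ℂ` with `E|z|² = v` (each real quadrature is a
real Gaussian of variance `v/2`). -/
noncomputable def gaussC (v : ℝ≥0) : Measure ℂ :=
  Measure.map (fun p : ℝ × ℝ => (⟨p.1, p.2⟩ : ℂ))
    ((gaussianReal 0 (v / 2)).prod (gaussianReal 0 (v / 2)))

/-- The half-open square grid cell `□_c` of side `ε` around the grid point `c`. -/
def gridCell (ε : ℝ) (c : ℂ) : Set ℂ :=
  {z : ℂ | -ε / 2 < (c - z).re ∧ (c - z).re ≤ ε / 2 ∧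
           -ε / 2 < (c - z).im ∧ (c - z).im ≤ ε / 2}

/-- The points of a square grid of spacing `ε` restricted to the disk `{α : |α|² ≤ 1/ε}`. -/
noncomputable def grid (ε : ℝ) : Finset ℂ :=
  (((Finset.Icc (-⌈ε⁻¹ ^ 2⌉) ⌈ε⁻¹ ^ 2⌉) ×ˢ (Finset.Icc (-⌈ε⁻¹ ^ 2⌉) ⌈ε⁻¹ ^ 2⌉)).image
      (fun p : ℤ × ℤ => (ε * p.1 + ε * p.2 * Complex.I : ℂ))).filter
    (fun c => ‖c‖ ^ 2 ≤ ε⁻¹)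

/-- The discretized ensemble weight `p(c) ∝ μ(□_c)`. -/
noncomputable def gridProb (μ : Measure ℂ) (ε : ℝ) (c : ℂ) : ℝ :=
  (μ (gridCell ε c)).toReal / ∑ c' ∈ grid ε, (μ (gridCell ε c')).toReal

/- ### Auxiliary lemmas -/

lemma gaussC_prob (v : ℝ≥0) : IsProbabilityMeasure (gaussC v) := by
  have : (fun p : ℝ × ℝ => (⟨p.1, p.2⟩ : ℂ)) = Complex.measurableEquivRealProd.symm := by
    funext p; simp [Complex.measurableEquivRealProd_symm_apply, Complex.ext_iff]
  rw [gaussC, this]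
  exact Measure.isProbabilityMeasure_map Complex.measurableEquivRealProd.symm.measurable.aemeasurable

lemma measurableSet_gridCell (ε : ℝ) (c : ℂ) : MeasurableSet (gridCell ε c) := by
  have h1 : Measurable fun z : ℂ => (c - z).re :=
    Complex.measurable_re.comp (measurable_const.sub measurable_id)
  have h2 : Measurable fun z : ℂ => (c - z).im :=
    Complex.measurable_im.comp (measurable_const.sub measurable_id)
  exact ((measurableSet_lt measurable_const h1).inter ((measurableSet_le h1 measurable_const).inter
    ((measurableSet_lt measurable_const h2).inter (measurableSet_le h2 measurable_const))))

lemma grid_mem (ε : ℝ) {c : ℂ} (hc : c ∈ grid ε) :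
    ∃ j k : ℤ, c.re = ε * j ∧ c.im = ε * k := by
  rw [grid, Finset.mem_filter, Finset.mem_image] at hc
  obtain ⟨⟨p, _, rfl⟩, _⟩ := hc
  exact ⟨p.1, p.2, by simp, by simp⟩

lemma int_eq_of_abs_lt {a b : ℤ} (h : |(a : ℝ) - b| < 1) : a = b := by
  have h2 : |((a - b : ℤ) : ℝ)| < 1 := by push_cast; exact h
  have h3 : |a - b| < 1 := by
    exact_mod_cast (by rw [← Int.cast_abs] at h2; exact_mod_cast h2 : ((|a - b| : ℤ) : ℝ) < 1)
  rw [abs_lt] at h3; omega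

lemma gridCell_disjoint {ε : ℝ} (hε : 0 < ε) {c c' : ℂ} (hc : c ∈ grid ε) (hc' : c' ∈ grid ε)
    (hne : c ≠ c') : Disjoint (gridCell ε c) (gridCell ε c') := by
  obtain ⟨j, k, hre, him⟩ := grid_mem ε hc
  obtain ⟨j', k', hre', him'⟩ := grid_mem ε hc'
  rw [Set.disjoint_left]
  rintro z ⟨a1, a2, a3, a4⟩ ⟨b1, b2, b3, b4⟩
  simp only [Complex.sub_re, Complex.sub_im] at *
  have key : ∀ x x' : ℤ, x ≠ x' → ¬ (|ε * x - ε * x'| < ε) := by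
    intro x x' hxx h
    rw [show ε * (x:ℝ) - ε * x' = ε * ((x:ℝ) - x') by ring, abs_mul, abs_of_pos hε] at h
    have : |(x : ℝ) - x'| < 1 := by
      by_contra hh
      push_neg at hh
      nlinarith
    exact hxx (int_eq_of_abs_lt this)
  have hj : j = j' := by
    by_contra hjj
    exact key j j' hjj (by rw [show ε * (j:ℝ) - ε * j' = (c.re - z.re) - (c'.re - z.re) by
      rw [hre, hre']; ring, abs_lt]; constructor <;> linarith)
  have hk : k = k' := by
    by_contra hkk
    exact key k k' hkk (by rw [show ε * (k:ℝ) - ε * k' = (c.im - z.im) - (c'.im - z.im) by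
      rw [him, him']; ring, abs_lt]; constructor <;> linarith)
  exact hne (Complex.ext (by rw [hre, hre', hj]) (by rw [him, him', hk]))

noncomputable def gfun (x : ℝ) : ℝ := 2 * Real.sqrt (1 - Real.exp (-x ^ 2))

lemma gfun_nonneg (x : ℝ) : 0 ≤ gfun x :=
  mul_nonneg (by norm_num) (Real.sqrt_nonneg _)

lemma exp_neg_sq_le_one (x : ℝ) : Real.exp (-x ^ 2) ≤ 1 := by
  rw [Real.exp_le_one_iff]; nlinarith [sq_nonneg x]

lemma gfun_le_two (x : ℝ) : gfun x ≤ 2 := by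
  have h : Real.sqrt (1 - Real.exp (-x ^ 2)) ≤ 1 := by
    rw [show (1:ℝ) = Real.sqrt 1 by simp]
    apply Real.sqrt_le_sqrt
    have := Real.exp_pos (-x ^ 2)
    simp only [Real.sqrt_one]
    linarith
  unfold gfun; linarith

lemma gfun_mono {x y : ℝ} (hx : 0 ≤ x) (hxy : x ≤ y) : gfun x ≤ gfun y := by
  unfold gfun
  have h0 : x ^ 2 ≤ y ^ 2 := by nlinarith
  have h2 : Real.exp (-y ^ 2) ≤ Real.exp (-x ^ 2) := Real.exp_le_exp.2 (by linarith)
  exact mul_le_mul_of_nonneg_left (Real.sqrt_le_sqrt (by linarith)) (by norm_num)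

lemma gfun_tendsto : Filter.Tendsto gfun (nhds 0) (nhds 0) := by
  have hc : Continuous gfun := by unfold gfun; continuity
  have := hc.tendsto 0
  simpa [gfun] using this

lemma mem_gridCell_abs {ε : ℝ} (hε : 0 < ε) {c α : ℂ} (hα : α ∈ gridCell ε c) :
    ‖c - α‖ ≤ ε := by
  obtain ⟨h1, h2, h3, h4⟩ := hα
  have hsq : Complex.normSq (c - α) ≤ ε ^ 2 := by
    rw [Complex.normSq_apply]; nlinarith
  rw [Complex.norm_def]
  calc Real.sqrt (Complex.normSq (c - α)) ≤ Real.sqrt (ε ^ 2) := Real.sqrt_le_sqrt hsq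
    _ = ε := by rw [Real.sqrt_sq hε.le]

lemma gridCell_cover {ε R : ℝ} (hε : 0 < ε) (hR : 0 ≤ R) (h1 : ε ≤ 1)
    (h2 : ε * (R + 1) ≤ 1) (h3 : 2 * (R + 1) ^ 2 ≤ ε⁻¹) {z : ℂ} (hz : ‖z‖ ≤ R) :
    ∃ c ∈ grid ε, z ∈ gridCell ε c := by
  set j := ⌊z.re / ε + 1/2⌋ with hj
  set k := ⌊z.im / ε + 1/2⌋ with hk
  have hinv : 0 < ε⁻¹ := inv_pos.2 hε
  have hRe : |z.re| ≤ R := (Complex.abs_re_le_norm z).trans hz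
  have hIm : |z.im| ≤ R := (Complex.abs_im_le_norm z).trans hz
  have key : ∀ u : ℝ, |u| ≤ R → (-ε/2 < ε * ⌊u / ε + 1/2⌋ - u ∧ ε * ⌊u / ε + 1/2⌋ - u ≤ ε/2)
      ∧ |(⌊u / ε + 1/2⌋ : ℝ)| ≤ ε⁻¹ ^ 2 := by
    intro u hu
    have hm : u / ε * ε = u := div_mul_cancel₀ u hε.ne'
    have f1 : (⌊u / ε + 1/2⌋ : ℝ) ≤ u / ε + 1/2 := Int.floor_le _
    have f2 : u / ε + 1/2 < ⌊u / ε + 1/2⌋ + 1 := Int.lt_floor_add_one _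
    have hb1 : ε * ⌊u / ε + 1/2⌋ ≤ u + ε/2 := by nlinarith
    have hb2 : u - ε/2 < ε * ⌊u / ε + 1/2⌋ := by nlinarith
    refine ⟨⟨by linarith, by linarith⟩, ?_⟩
    have habs : |ε * (⌊u / ε + 1/2⌋ : ℝ)| ≤ R + 1 := by
      rw [abs_le]; rw [abs_le] at hu; constructor <;> nlinarith
    rw [abs_mul, abs_of_pos hε] at habs
    have hR1 : R + 1 ≤ ε⁻¹ := by
      have : R + 1 ≤ 1 / ε := by rw [le_div_iff₀ hε]; nlinarith
      simpa [one_div] using this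
    calc |(⌊u / ε + 1/2⌋ : ℝ)| ≤ (R + 1) / ε := by
          rw [le_div_iff₀ hε]; linarith [habs]
      _ ≤ ε⁻¹ * ε⁻¹ := by
          rw [div_le_iff₀ hε]; calc R + 1 ≤ ε⁻¹ := hR1
            _ = ε⁻¹ * ε⁻¹ * ε := by field_simp
      _ = ε⁻¹ ^ 2 := by ring
  obtain ⟨⟨hre1, hre2⟩, hjb⟩ := key z.re hRe
  obtain ⟨⟨him1, him2⟩, hkb⟩ := key z.im hIm
  set c : ℂ := ε * j + ε * k * Complex.I with hc
  have hcre : c.re = ε * j := by simp [hc]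
  have hcim : c.im = ε * k := by simp [hc]
  have hcell : z ∈ gridCell ε c := by
    refine ⟨?_, ?_, ?_, ?_⟩ <;> simp only [Complex.sub_re, Complex.sub_im, hcre, hcim] <;> linarith
  refine ⟨c, ?_, hcell⟩
  rw [grid, Finset.mem_filter, Finset.mem_image]
  have hceil : (ε⁻¹ ^ 2 : ℝ) ≤ (⌈ε⁻¹ ^ 2⌉ : ℝ) := Int.le_ceil _
  have hjZ : |j| ≤ ⌈ε⁻¹ ^ 2⌉ := by
    have : ((|j| : ℤ) : ℝ) ≤ ((⌈ε⁻¹ ^ 2⌉ : ℤ) : ℝ) := by push_cast; exact hjb.trans hceil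
    exact_mod_cast this
  have hkZ : |k| ≤ ⌈ε⁻¹ ^ 2⌉ := by
    have : ((|k| : ℤ) : ℝ) ≤ ((⌈ε⁻¹ ^ 2⌉ : ℤ) : ℝ) := by push_cast; exact hkb.trans hceil
    exact_mod_cast this
  refine ⟨⟨(j, k), ?_, rfl⟩, ?_⟩
  · rw [Finset.mem_product]
    rw [abs_le] at hjZ hkZ
    constructor <;> rw [Finset.mem_Icc] <;> constructor <;> omega
  · have habs : ‖c‖ ≤ R + 1 := by
      calc ‖c‖ ≤ ‖z‖ + ‖c - z‖ := by
            have h := norm_add_le z (c - z)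
            rwa [show z + (c - z) = c by ring] at h
        _ ≤ R + ε := add_le_add hz (mem_gridCell_abs hε hcell)
        _ ≤ R + 1 := by linarith
    calc ‖c‖ ^ 2 ≤ (R + 1) ^ 2 := by nlinarith [norm_nonneg c]
      _ ≤ ε⁻¹ := by nlinarith

theorem gaussian_ensemble_discretization {V : Type*} [NormedAddCommGroup V]
    [NormedSpace ℝ V] [CompleteSpace V]
    (coh : ℂ → V)  -- `coh α` represents the trace-class operator `|α⟩⟨α|`
    (hcoh_dist : ∀ α β : ℂ, ‖coh α - coh β‖ =
      2 * Real.sqrt (1 - Real.exp (-(‖α - β‖) ^ 2)))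
    (E' : ℝ≥0)
    (hcoh_int : Integrable coh (gaussC E')) :
    Filter.Tendsto (fun ε : ℝ =>
        ‖(∑ c ∈ grid ε, gridProb (gaussC E') ε c • coh c) - ∫ α, coh α ∂(gaussC E')‖)
      (nhdsWithin 0 (Set.Ioi 0)) (nhds 0) ∧
    ∀ δ : ℝ, 0 < δ → ∃ ε₀ > 0, ∀ ε : ℝ, 0 < ε → ε < ε₀ →
      ∀ c ∈ grid ε, ∀ α ∈ gridCell ε c, ‖coh c - coh α‖ < δ := by
  set μ := gaussC E' with hμdef
  have hprob : IsProbabilityMeasure μ := gaussC_prob E'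
  have hdist : ∀ α β : ℂ, ‖coh α - coh β‖ = gfun (‖α - β‖) := by
    intro α β; rw [gfun]; exact hcoh_dist α β
  set B : ℝ := ‖coh 0‖ + 2 with hBdef
  have hBpos : 0 ≤ B := by positivity
  have hB : ∀ α : ℂ, ‖coh α‖ ≤ B := by
    intro α
    calc ‖coh α‖ = ‖coh 0 + (coh α - coh 0)‖ := by rw [add_sub_cancel]
      _ ≤ ‖coh 0‖ + ‖coh α - coh 0‖ := norm_add_le _ _
      _ ≤ ‖coh 0‖ + 2 := by rw [hdist]; linarith [gfun_le_two (‖α - 0‖)]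
  -- cell distance bound
  have hcelldist : ∀ {ε : ℝ}, 0 < ε → ∀ {c α : ℂ}, α ∈ gridCell ε c →
      ‖coh c - coh α‖ ≤ gfun ε := by
    intro ε hε c α hα
    rw [hdist]
    exact gfun_mono (norm_nonneg _) (mem_gridCell_abs hε hα)
  -- the union of cells and its mass
  set U : ℝ → Set ℂ := fun ε => ⋃ c ∈ grid ε, gridCell ε c with hUdef
  have hUm : ∀ ε, MeasurableSet (U ε) := fun ε =>
    Finset.measurableSet_biUnion _ (fun c _ => measurableSet_gridCell ε c)
  set N : ℝ → ℝ := fun ε => (μ (U ε)).toReal with hNdef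
  have hNsum : ∀ {ε : ℝ}, 0 < ε →
      (∑ c' ∈ grid ε, (μ (gridCell ε c')).toReal) = N ε := by
    intro ε hε
    have hd : (↑(grid ε) : Set ℂ).PairwiseDisjoint (gridCell ε) := fun c hc c' hc' hne =>
      gridCell_disjoint hε hc hc' hne
    have := measure_biUnion_finset (μ := μ) hd (fun c _ => measurableSet_gridCell ε c)
    rw [hNdef]
    simp only [hUdef]
    rw [this, ENNReal.toReal_sum (fun c _ => measure_ne_top μ _)]
  have hNle1 : ∀ ε, N ε ≤ 1 := by
    intro ε
    have h := measure_mono (μ := μ) (Set.subset_univ (U ε))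
    rw [measure_univ] at h
    calc N ε ≤ (1 : ENNReal).toReal := ENNReal.toReal_mono (by norm_num) h
      _ = 1 := by simp
  have hNnn : ∀ ε, 0 ≤ N ε := fun ε => ENNReal.toReal_nonneg
  have hcompl : ∀ ε, ((μ (U ε)ᶜ)).toReal = 1 - N ε := by
    intro ε
    rw [measure_compl (hUm ε) (measure_ne_top μ _), measure_univ]
    rw [ENNReal.toReal_sub_of_le (prob_le_one) (by norm_num)]
    simp [hNdef]
  -- the key per-ε bound
  have hbound : ∀ ε : ℝ, 0 < ε →
      ‖(∑ c ∈ grid ε, gridProb μ ε c • coh c) - ∫ α, coh α ∂μ‖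
        ≤ 2 * B * (1 - N ε) + gfun ε := by
    intro ε hε
    set m : ℂ → ℝ := fun c => (μ (gridCell ε c)).toReal with hmdef
    have hmnn : ∀ c, 0 ≤ m c := fun c => ENNReal.toReal_nonneg
    have hdisj' : (↑(grid ε) : Set ℂ).Pairwise (Function.onFun Disjoint (gridCell ε)) := fun c hc c' hc' hne =>
      gridCell_disjoint hε hc hc' hne
    have hsplit : ∫ α, coh α ∂μ =
        (∑ c ∈ grid ε, ∫ α in gridCell ε c, coh α ∂μ) + ∫ α in (U ε)ᶜ, coh α ∂μ := by
      rw [← integral_biUnion_finset (grid ε) (fun c _ => measurableSet_gridCell ε c) hdisj'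
        (fun c _ => hcoh_int.integrableOn)]
      exact (integral_add_compl (hUm ε) hcoh_int).symm
    have hkey : (∑ c ∈ grid ε, gridProb μ ε c • coh c) - ∫ α, coh α ∂μ
        = (∑ c ∈ grid ε, (gridProb μ ε c • coh c - ∫ α in gridCell ε c, coh α ∂μ))
          - ∫ α in (U ε)ᶜ, coh α ∂μ := by
      rw [hsplit, Finset.sum_sub_distrib]; abel
    -- per-cell estimate
    have hcell : ∀ c ∈ grid ε, ‖gridProb μ ε c • coh c - ∫ α in gridCell ε c, coh α ∂μ‖
        ≤ |gridProb μ ε c - m c| * B + m c * gfun ε := by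
      intro c hc
      have hconst : ∫ _ in gridCell ε c, coh c ∂μ = m c • coh c := by
        rw [setIntegral_const]; rfl
      have hi1 : IntegrableOn (fun _ => coh c) (gridCell ε c) μ :=
        integrableOn_const (measure_ne_top _ _)
      have hi2 : IntegrableOn coh (gridCell ε c) μ := hcoh_int.integrableOn
      have hrw : gridProb μ ε c • coh c - ∫ α in gridCell ε c, coh α ∂μ
          = (gridProb μ ε c - m c) • coh c
            + ∫ α in gridCell ε c, (coh c - coh α) ∂μ := by
        rw [integral_sub hi1 hi2, hconst, sub_smul]; abel
      rw [hrw]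
      have h1 : ‖(gridProb μ ε c - m c) • coh c‖ ≤ |gridProb μ ε c - m c| * B := by
        rw [norm_smul, Real.norm_eq_abs]
        exact mul_le_mul_of_nonneg_left (hB c) (abs_nonneg _)
      have h2 : ‖∫ α in gridCell ε c, (coh c - coh α) ∂μ‖ ≤ gfun ε * m c := by
        apply norm_setIntegral_le_of_norm_le_const (measure_lt_top _ _)
        intro α hα
        exact hcelldist hε hα
      calc _ ≤ ‖(gridProb μ ε c - m c) • coh c‖ + ‖∫ α in gridCell ε c, (coh c - coh α) ∂μ‖ :=
            norm_add_le _ _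
        _ ≤ |gridProb μ ε c - m c| * B + gfun ε * m c := add_le_add h1 h2
        _ = |gridProb μ ε c - m c| * B + m c * gfun ε := by ring
    -- sum of |p - m|
    have habsum : ∑ c ∈ grid ε, |gridProb μ ε c - m c| ≤ 1 - N ε := by
      have hp : ∀ c, gridProb μ ε c = m c / N ε := by
        intro c; rw [gridProb, hNsum hε]
      rcases eq_or_lt_of_le (hNnn ε) with hN0 | hNpos
      · have hz : ∀ c ∈ grid ε, m c = 0 := by
          have hsum0 : ∑ c ∈ grid ε, m c = 0 := by rw [hNsum hε, ← hN0]
          intro c hc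
          exact (Finset.sum_eq_zero_iff_of_nonneg (fun c _ => hmnn c)).1 hsum0 c hc
        have : ∑ c ∈ grid ε, |gridProb μ ε c - m c| = 0 := by
          apply Finset.sum_eq_zero
          intro c hc
          rw [hp c, hz c hc]
          simp
        rw [this]
        linarith [hNle1 ε]
      · have heach : ∀ c ∈ grid ε, |gridProb μ ε c - m c| = m c * ((1 - N ε) / N ε) := by
          intro c hc
          rw [hp c]
          rw [abs_of_nonneg]
          · field_simp
          · have : m c ≤ m c / N ε := by
              rw [le_div_iff₀ hNpos]
              nlinarith [hmnn c, hNle1 ε]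
            linarith
        rw [Finset.sum_congr rfl heach, ← Finset.sum_mul, hNsum hε, mul_comm,
          div_mul_cancel₀ _ (ne_of_gt hNpos)]
    -- tail estimate
    have htail : ‖∫ α in (U ε)ᶜ, coh α ∂μ‖ ≤ B * (1 - N ε) := by
      have := norm_setIntegral_le_of_norm_le_const (μ := μ) (s := (U ε)ᶜ)
        (measure_lt_top _ _) (fun α _ => hB α) (f := coh)
      rw [measureReal_def, hcompl ε] at this
      exact this
    calc ‖(∑ c ∈ grid ε, gridProb μ ε c • coh c) - ∫ α, coh α ∂μ‖
        = ‖(∑ c ∈ grid ε, (gridProb μ ε c • coh c - ∫ α in gridCell ε c, coh α ∂μ))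
            - ∫ α in (U ε)ᶜ, coh α ∂μ‖ := by rw [hkey]
      _ ≤ ‖∑ c ∈ grid ε, (gridProb μ ε c • coh c - ∫ α in gridCell ε c, coh α ∂μ)‖
            + ‖∫ α in (U ε)ᶜ, coh α ∂μ‖ := norm_sub_le _ _
      _ ≤ (∑ c ∈ grid ε, ‖gridProb μ ε c • coh c - ∫ α in gridCell ε c, coh α ∂μ‖)
            + B * (1 - N ε) := add_le_add (norm_sum_le _ _) htail
      _ ≤ (∑ c ∈ grid ε, (|gridProb μ ε c - m c| * B + m c * gfun ε)) + B * (1 - N ε) := by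
            exact add_le_add (Finset.sum_le_sum hcell) le_rfl
      _ = (∑ c ∈ grid ε, |gridProb μ ε c - m c|) * B
            + (∑ c ∈ grid ε, m c) * gfun ε + B * (1 - N ε) := by
            rw [Finset.sum_add_distrib, ← Finset.sum_mul, ← Finset.sum_mul]
      _ ≤ (1 - N ε) * B + 1 * gfun ε + B * (1 - N ε) := by
            have h1 : (∑ c ∈ grid ε, |gridProb μ ε c - m c|) * B ≤ (1 - N ε) * B :=
              mul_le_mul_of_nonneg_right habsum hBpos
            have h2 : (∑ c ∈ grid ε, m c) * gfun ε ≤ 1 * gfun ε := by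
              apply mul_le_mul_of_nonneg_right _ (gfun_nonneg ε)
              rw [hNsum hε]; exact hNle1 ε
            linarith
      _ = 2 * B * (1 - N ε) + gfun ε := by ring
  -- N tends to 1
  have hNto : Filter.Tendsto (fun ε => 1 - N ε) (nhdsWithin 0 (Set.Ioi 0)) (nhds 0) := by
    rw [Metric.tendsto_nhds]
    intro η hη
    -- find a radius with small tail
    set A : ℕ → Set ℂ := fun n => {z : ℂ | (n : ℝ) < ‖z‖} with hAdef
    have hAm : ∀ n, MeasurableSet (A n) :=
      fun n => measurableSet_lt measurable_const continuous_norm.measurable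
    have hAnt : Antitone A := by
      intro n m hnm z hz
      exact lt_of_le_of_lt (show ((n:ℝ) : ℝ) ≤ (m:ℝ) from Nat.cast_le.mpr hnm) hz
    have hAempty : ⋂ n, A n = ∅ := by
      ext z
      simp only [Set.mem_iInter, Set.mem_empty_iff_false, iff_false, not_forall]
      obtain ⟨n, hn⟩ := exists_nat_gt ‖z‖
      exact ⟨n, by simp [hAdef]; linarith⟩
    have htends : Filter.Tendsto (fun n => μ (A n)) Filter.atTop (nhds 0) := by
      have := tendsto_measure_iInter_atTop (μ := μ) (fun n => (hAm n).nullMeasurableSet) hAnt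
        ⟨0, measure_ne_top μ _⟩
      rw [hAempty] at this
      simpa [Function.comp_def] using this
    have htends' : Filter.Tendsto (fun n => (μ (A n)).toReal) Filter.atTop (nhds 0) := by
      have := (ENNReal.tendsto_toReal (by norm_num : (0:ENNReal) ≠ ⊤)).comp htends
      exact this
    obtain ⟨n, hn⟩ := (htends'.eventually (gt_mem_nhds hη)).exists
    set R : ℝ := (n : ℝ) with hRdef
    have hR0 : 0 ≤ R := Nat.cast_nonneg n
    set ε₁ : ℝ := min 1 (min (1 / (R + 1)) (1 / (2 * (R + 1) ^ 2))) with hε₁def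
    have hε₁pos : 0 < ε₁ := by
      apply lt_min (by norm_num)
      apply lt_min
      · positivity
      · positivity
    have hIoo : Set.Ioo 0 ε₁ ∈ nhdsWithin (0:ℝ) (Set.Ioi 0) :=
      Ioo_mem_nhdsGT_of_mem ⟨le_refl 0, hε₁pos⟩
    filter_upwards [hIoo] with ε hε
    obtain ⟨hε0, hε1⟩ := hε
    have hc1 : ε ≤ 1 := le_of_lt (lt_of_lt_of_le hε1 (min_le_left _ _))
    have hc2 : ε * (R + 1) ≤ 1 := by
      have h := lt_of_lt_of_le hε1 ((min_le_right _ _).trans (min_le_left _ _))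
      rw [lt_div_iff₀ (by positivity)] at h
      linarith
    have hc3 : 2 * (R + 1) ^ 2 ≤ ε⁻¹ := by
      have h := lt_of_lt_of_le hε1 ((min_le_right _ _).trans (min_le_right _ _))
      rw [lt_div_iff₀ (by positivity)] at h
      have : 2 * (R + 1) ^ 2 ≤ 1 / ε := by
        rw [le_div_iff₀ hε0]; nlinarith
      simpa [one_div] using this
    have hsub : (U ε)ᶜ ⊆ A n := by
      intro z hz
      by_contra hzA
      have hzR : ‖z‖ ≤ R := by
        simp only [hAdef, Set.mem_setOf_eq, not_lt] at hzA
        exact hzA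
      obtain ⟨c, hcg, hcell⟩ := gridCell_cover hε0 hR0 hc1 hc2 hc3 hzR
      exact hz (Set.mem_biUnion hcg hcell)
    have hle : 1 - N ε ≤ (μ (A n)).toReal := by
      rw [← hcompl ε]
      exact ENNReal.toReal_mono (measure_ne_top μ _) (measure_mono hsub)
    rw [Real.dist_eq, sub_zero, abs_of_nonneg (by linarith [hNle1 ε])]
    linarith
  -- squeeze
  constructor
  · have hgt : Filter.Tendsto gfun (nhdsWithin 0 (Set.Ioi 0)) (nhds 0) :=
      gfun_tendsto.mono_left nhdsWithin_le_nhds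
    have hG : Filter.Tendsto (fun ε => 2 * B * (1 - N ε) + gfun ε)
        (nhdsWithin 0 (Set.Ioi 0)) (nhds 0) := by
      have := (hNto.const_mul (2 * B)).add hgt
      simpa using this
    apply squeeze_zero' ?_ ?_ hG
    · filter_upwards with ε using norm_nonneg _
    · filter_upwards [self_mem_nhdsWithin] with ε hε
      exact hbound ε hε
  · intro δ hδ
    have := gfun_tendsto
    rw [Metric.tendsto_nhds_nhds] at this
    obtain ⟨ε₀, hε₀pos, hε₀⟩ := this δ hδ
    refine ⟨ε₀, hε₀pos, fun ε hε hεlt c hc α hα => ?_⟩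
    have hgδ : |gfun ε| < δ := by
      have := hε₀ (x := ε) (by rw [Real.dist_eq]; simpa [abs_of_pos hε] using hεlt)
      rw [Real.dist_eq] at this
      simpa using this
    calc ‖coh c - coh α‖ ≤ gfun ε := hcelldist hε hα
      _ ≤ |gfun ε| := le_abs_self _
      _ < δ := hgδ
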